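/- Let K be a number field and F = (F₀,F₁,F₂) a triple of homogeneous polynomials of common degree λ ≥ 2 in K[x₀,x₁,x₂]. Let a ∈ K³ be such that F^n(a) ≠ 0 for every n ≥ 0. Then the limit ĥ(a) := lim_{n→∞} λ^{-n}·h(F^n(a)) exists, is finite and nonnegative, and satisfies the functional equation ĥ(F(a)) = λ·ĥ(a). -/

import Mathlib

open MvPolynomial Filter

/-- The polynomial map `K³ → K³` induced by a triple of polynomials. -/
noncomputable def polyMap {K : Type*} [Field K] (P : Fin 3 → MvPolynomial (Fin 3) K) :
    (Fin 3 → K) → (Fin 3 → K) :=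
  fun a i => eval a (P i)

/-- `‖b‖_v = max (|b₀|_v, |b₁|_v, |b₂|_v)`. -/
noncomputable def vNorm {K : Type*} [Field K] (v : AbsoluteValue K ℝ) (b : Fin 3 → K) : ℝ :=
  max (v (b 0)) (max (v (b 1)) (v (b 2)))

section Aux

variable {K : Type*} [Field K]

lemma apply_le_vNorm (v : AbsoluteValue K ℝ) (b : Fin 3 → K) (i : Fin 3) :
    v (b i) ≤ vNorm v b := by
  fin_cases i
  · exact le_max_left _ _
  · exact (le_max_left _ _).trans (le_max_right _ _)
  · exact (le_max_right _ _).trans (le_max_right _ _)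

lemma vNorm_nonneg (v : AbsoluteValue K ℝ) (b : Fin 3 → K) : 0 ≤ vNorm v b :=
  (v.nonneg _).trans (apply_le_vNorm v b 0)

lemma vNorm_le (v : AbsoluteValue K ℝ) {b : Fin 3 → K} {R : ℝ} (h : ∀ i, v (b i) ≤ R) :
    vNorm v b ≤ R := max_le (h 0) (max_le (h 1) (h 2))

lemma exists_coord_ne_zero {b : Fin 3 → K} (hb : b ≠ 0) : ∃ i, b i ≠ 0 := by
  by_contra h
  push_neg at h
  exact hb (funext h)

lemma vNorm_pos (v : AbsoluteValue K ℝ) {b : Fin 3 → K} (hb : b ≠ 0) : 0 < vNorm v b := by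
  obtain ⟨i, hi⟩ := exists_coord_ne_zero hb
  exact (v.pos hi).trans_le (apply_le_vNorm v b i)


lemma one_le_prodR {α : Type*} (s : Finset α) (f : α → ℝ) (h : ∀ i ∈ s, 1 ≤ f i) :
    1 ≤ ∏ i ∈ s, f i := by
  calc (1:ℝ) = ∏ _i ∈ s, 1 := by simp
    _ ≤ ∏ i ∈ s, f i := Finset.prod_le_prod (by simp) h

lemma single_le_prodR {α : Type*} (s : Finset α) (f : α → ℝ) (h : ∀ i ∈ s, 1 ≤ f i)
    {a : α} (ha : a ∈ s) : f a ≤ ∏ i ∈ s, f i := by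
  classical
  rw [← Finset.prod_erase_mul s f ha]
  calc f a = 1 * f a := (one_mul _).symm
    _ ≤ (∏ i ∈ s.erase a, f i) * f a := by
        refine mul_le_mul_of_nonneg_right ?_ (zero_le_one.trans (h a ha))
        exact one_le_prodR _ _ fun i hi => h i (Finset.mem_of_mem_erase hi)

lemma ultra_sum {α : Type*} (v : AbsoluteValue K ℝ)
    (hv : ∀ x y : K, v (x + y) ≤ max (v x) (v y))
    (s : Finset α) (f : α → K) {R : ℝ} (hR : 0 ≤ R)
    (hf : ∀ m ∈ s, v (f m) ≤ R) : v (∑ m ∈ s, f m) ≤ R := by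
  classical
  induction s using Finset.induction_on with
  | empty => simpa using hR
  | @insert x s hx ih =>
    rw [Finset.sum_insert hx]
    exact (hv _ _).trans (max_le (hf _ (Finset.mem_insert_self _ _))
      (ih fun m hm => hf m (Finset.mem_insert_of_mem hm)))

lemma monomial_bound (v : AbsoluteValue K ℝ) (b : Fin 3 → K) (d : Fin 3 →₀ ℕ) :
    v (∏ i ∈ d.support, b i ^ d i) ≤ vNorm v b ^ d.degree := by
  rw [map_prod, show d.degree = ∑ i ∈ d.support, d i from rfl, ← Finset.prod_pow_eq_pow_sum]
  refine Finset.prod_le_prod (fun i _ => v.nonneg _) (fun i _ => ?_)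
  rw [map_pow]
  exact pow_le_pow_left₀ (v.nonneg _) (apply_le_vNorm v b i) _

lemma eval_bound_ultra (v : AbsoluteValue K ℝ)
    (hv : ∀ x y : K, v (x + y) ≤ max (v x) (v y))
    {lam : ℕ} (Q : MvPolynomial (Fin 3) K) (hQ : Q.IsHomogeneous lam) (b : Fin 3 → K) :
    v (eval b Q) ≤ (∏ d ∈ Q.support, max 1 (v (coeff d Q))) * vNorm v b ^ lam := by
  have hP : (0:ℝ) ≤ ∏ d ∈ Q.support, max 1 (v (coeff d Q)) :=
    Finset.prod_nonneg fun d _ => zero_le_one.trans (le_max_left _ _)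
  rw [eval_eq]
  refine ultra_sum v hv _ _ (mul_nonneg hP (pow_nonneg (vNorm_nonneg v b) _)) ?_
  intro d hd
  rw [map_mul]
  have h1 : v (coeff d Q) ≤ ∏ e ∈ Q.support, max 1 (v (coeff e Q)) :=
    (le_max_right _ _).trans (single_le_prodR _ (fun e => max 1 (v (coeff e Q))) (fun e _ => le_max_left _ _) hd)
  have hdeg : d.degree = lam := by
    rw [Finsupp.degree_eq_weight_one]
    exact hQ (mem_support_iff.mp hd)
  have h2 := monomial_bound v b d
  rw [hdeg] at h2
  exact mul_le_mul h1 h2 (v.nonneg _) hP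

lemma eval_bound_gen (v : AbsoluteValue K ℝ) {lam : ℕ}
    (Q : MvPolynomial (Fin 3) K) (hQ : Q.IsHomogeneous lam) (b : Fin 3 → K) :
    v (eval b Q) ≤ (max 1 (∑ d ∈ Q.support, v (coeff d Q))) * vNorm v b ^ lam := by
  rw [eval_eq]
  refine (v.sum_le _ _).trans ?_
  calc ∑ d ∈ Q.support, v (coeff d Q * ∏ i ∈ d.support, b i ^ d i)
      ≤ ∑ d ∈ Q.support, v (coeff d Q) * vNorm v b ^ lam := by
        refine Finset.sum_le_sum fun d hd => ?_
        rw [map_mul]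
        have hdeg : d.degree = lam := by
          rw [Finsupp.degree_eq_weight_one]
          exact hQ (mem_support_iff.mp hd)
        have h2 := monomial_bound v b d
        rw [hdeg] at h2
        exact mul_le_mul_of_nonneg_left h2 (v.nonneg _)
    _ = (∑ d ∈ Q.support, v (coeff d Q)) * vNorm v b ^ lam := by rw [Finset.sum_mul]
    _ ≤ _ := mul_le_mul_of_nonneg_right (le_max_right _ _)
          (pow_nonneg (vNorm_nonneg v b) _)

/-- Tate's telescoping trick. -/
lemma tate_limit {q C : ℝ} (hq0 : 0 < q) (hq1 : q < 1) (hC : 0 ≤ C)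
    (u : ℕ → ℝ) (hu0 : ∀ n, 0 ≤ u n)
    (hrec : ∀ n, u (n + 1) ≤ u n + C * q ^ (n + 1)) :
    ∃ L, 0 ≤ L ∧ Tendsto u atTop (nhds L) := by
  have h1q : 0 < 1 - q := by linarith
  set D := C * q / (1 - q) with hD
  have hD0 : 0 ≤ D := by positivity
  have key : ∀ n : ℕ, C * q ^ (n + 1) + D * q ^ (n + 1) = D * q ^ n := by
    intro n
    have hCD : (C + D) * q = D := by
      have h : D * (1 - q) = C * q := by
        rw [hD, div_mul_cancel₀ _ (ne_of_gt h1q)]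
      linear_combination -h
    calc C * q ^ (n + 1) + D * q ^ (n + 1) = ((C + D) * q) * q ^ n := by ring
      _ = D * q ^ n := by rw [hCD]
  have hanti : Antitone fun n => u n + D * q ^ n := by
    apply antitone_nat_of_succ_le
    intro n
    have h1 := hrec n
    have h2 := key n
    show u (n + 1) + D * q ^ (n + 1) ≤ u n + D * q ^ n
    linarith
  have hbdd : BddBelow (Set.range fun n => u n + D * q ^ n) := by
    refine ⟨0, ?_⟩
    rintro x ⟨n, rfl⟩
    have := hu0 n
    positivity
  have ht := tendsto_atTop_ciInf hanti hbdd
  refine ⟨⨅ n, u n + D * q ^ n, ?_, ?_⟩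
  · refine le_ciInf fun n => ?_
    have := hu0 n
    positivity
  · have hz : Tendsto (fun n : ℕ => D * q ^ n) atTop (nhds 0) := by
      have := tendsto_pow_atTop_nhds_zero_of_lt_one hq0.le hq1
      simpa using this.const_mul D
    have := ht.sub hz
    simpa using this

end Aux

/-- the canonical height `ĥ(a) = lim_n λ^{-n} h(F^n(a))` exists,
is finite and nonnegative, and satisfies `ĥ(F(a)) = λ ĥ(a)`, where
`h(b) = ∑_{v ∈ M_K} log ‖b‖_v` is the logarithmic Weil height. -/
theorem stmt_12 {K : Type*} [Field K] [NumberField K]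
    {ι : Type*} (M : ι → AbsoluteValue K ℝ)
    (hnontriv : ∀ w : ι, ∃ x : K, x ≠ 0 ∧ M w x ≠ 1)
    (hfin : ∀ c : K, c ≠ 0 → (Function.support fun w => Real.log (M w c)).Finite)
    (hprod : ∀ c : K, c ≠ 0 → ∑ᶠ w : ι, Real.log (M w c) = 0)
    (harch : {w : ι | ¬ ∀ x y : K, M w (x + y) ≤ max (M w x) (M w y)}.Finite)
    (lam : ℕ) (hlam : 2 ≤ lam)
    (P : Fin 3 → MvPolynomial (Fin 3) K)
    (hhom : ∀ i, (P i).IsHomogeneous lam)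
    (a : Fin 3 → K)
    (ha : ∀ n : ℕ, (polyMap P)^[n] a ≠ 0) :
    ∃ L : ℝ,
      Tendsto (fun n : ℕ => ((lam : ℝ)⁻¹) ^ n *
          ∑ᶠ w : ι, Real.log (vNorm (M w) ((polyMap P)^[n] a))) atTop (nhds L) ∧
      0 ≤ L ∧
      Tendsto (fun n : ℕ => ((lam : ℝ)⁻¹) ^ n *
          ∑ᶠ w : ι, Real.log (vNorm (M w) ((polyMap P)^[n] (polyMap P a)))) atTop
        (nhds ((lam : ℝ) * L)) := by
  classical
  -- finiteness of the support of the local height functions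
  have hsupp : ∀ b : Fin 3 → K, b ≠ 0 →
      (Function.support fun w => Real.log (vNorm (M w) b)).Finite := by
    intro b hb
    have hsub : (Function.support fun w => Real.log (vNorm (M w) b)) ⊆
        ⋃ i : Fin 3, {w : ι | b i ≠ 0 ∧ Real.log (M w (b i)) ≠ 0} := by
      intro w hw
      simp only [Function.mem_support] at hw
      by_contra hcon
      simp only [Set.mem_iUnion, Set.mem_setOf_eq, not_exists, not_and, not_not] at hcon
      have hone : ∀ i, b i ≠ 0 → M w (b i) = 1 := by
        intro i hi
        have h0 := (M w).pos hi
        rcases Real.log_eq_zero.mp (hcon i hi) with h | h | h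
        · exact absurd h (ne_of_gt h0)
        · exact h
        · linarith
      have hle : vNorm (M w) b ≤ 1 := by
        refine vNorm_le _ fun i => ?_
        by_cases hi : b i = 0
        · rw [hi, map_zero]; exact zero_le_one
        · rw [hone i hi]
      have hge : 1 ≤ vNorm (M w) b := by
        obtain ⟨i, hi⟩ := exists_coord_ne_zero hb
        rw [← hone i hi]
        exact apply_le_vNorm _ _ _
      exact hw (by rw [le_antisymm hle hge, Real.log_one])
    refine Set.Finite.subset (Set.finite_iUnion fun i => ?_) hsub
    by_cases hi : b i = 0
    · have : {w : ι | b i ≠ 0 ∧ Real.log (M w (b i)) ≠ 0} = ∅ := by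
        ext w; simp [hi]
      rw [this]; exact Set.finite_empty
    · exact (hfin (b i) hi).subset fun w hw => hw.2
  -- nonnegativity of heights
  have hnonneg : ∀ b : Fin 3 → K, b ≠ 0 →
      0 ≤ ∑ᶠ w : ι, Real.log (vNorm (M w) b) := by
    intro b hb
    obtain ⟨i, hi⟩ := exists_coord_ne_zero hb
    have hf1 := hfin (b i) hi
    have hf2 := hsupp b hb
    set s : Finset ι := (hf1.union hf2).toFinset with hs
    have e1 : ∑ᶠ w : ι, Real.log (M w (b i)) = ∑ w ∈ s, Real.log (M w (b i)) := by
      refine finsum_eq_sum_of_support_subset _ ?_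
      rw [hs, Set.Finite.coe_toFinset]
      exact Set.subset_union_left
    have e2 : ∑ᶠ w : ι, Real.log (vNorm (M w) b) = ∑ w ∈ s, Real.log (vNorm (M w) b) := by
      refine finsum_eq_sum_of_support_subset _ ?_
      rw [hs, Set.Finite.coe_toFinset]
      exact Set.subset_union_right
    rw [e2, ← hprod (b i) hi, e1]
    refine Finset.sum_le_sum fun w _ => ?_
    exact (Real.log_le_log_iff ((M w).pos hi) (vNorm_pos (M w) hb)).mpr
      (apply_le_vNorm (M w) b i)
  -- the local multiplicative bound constants
  set bad : Set ι := {w : ι | ¬ ∀ x y : K, M w (x + y) ≤ max (M w x) (M w y)} with hbad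
  set B : ι → ℝ := fun w =>
    (∏ i : Fin 3, ∏ d ∈ (P i).support, max 1 (M w (coeff d (P i)))) *
      (if w ∈ bad then ∏ i : Fin 3, max 1 (∑ d ∈ (P i).support, M w (coeff d (P i)))
        else 1) with hBdef
  have hprod1 : ∀ w : ι,
      (1:ℝ) ≤ ∏ i : Fin 3, ∏ d ∈ (P i).support, max 1 (M w (coeff d (P i))) :=
    fun w => one_le_prodR _ _ fun i _ => one_le_prodR _ _ fun d _ => le_max_left _ _
  have hif1 : ∀ w : ι, (1:ℝ) ≤
      (if w ∈ bad then ∏ i : Fin 3, max 1 (∑ d ∈ (P i).support, M w (coeff d (P i)))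
        else 1) := by
    intro w
    split
    · exact one_le_prodR _ _ fun i _ => le_max_left _ _
    · exact le_refl 1
  have hB1 : ∀ w, 1 ≤ B w := by
    intro w
    calc (1:ℝ) = 1 * 1 := by ring
      _ ≤ B w := mul_le_mul (hprod1 w) (hif1 w) zero_le_one (zero_le_one.trans (hprod1 w))
  -- the key local bound
  have hBbound : ∀ (w : ι) (b : Fin 3 → K),
      vNorm (M w) (polyMap P b) ≤ B w * vNorm (M w) b ^ lam := by
    intro w b
    refine vNorm_le _ fun i => ?_
    show M w (eval b (P i)) ≤ _
    by_cases hw : w ∈ bad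
    · have hb1 := eval_bound_gen (M w) (P i) (hhom i) b
      refine hb1.trans (mul_le_mul_of_nonneg_right ?_
        (pow_nonneg (vNorm_nonneg _ _) _))
      have hfac : max 1 (∑ d ∈ (P i).support, M w (coeff d (P i))) ≤
          ∏ j : Fin 3, max 1 (∑ d ∈ (P j).support, M w (coeff d (P j))) :=
        single_le_prodR _ (fun j => max 1 (∑ d ∈ (P j).support, M w (coeff d (P j))))
          (fun j _ => le_max_left _ _) (Finset.mem_univ i)
      rw [hBdef]
      simp only [if_pos hw]
      calc max 1 (∑ d ∈ (P i).support, M w (coeff d (P i)))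
          ≤ ∏ j : Fin 3, max 1 (∑ d ∈ (P j).support, M w (coeff d (P j))) := hfac
        _ = 1 * ∏ j : Fin 3, max 1 (∑ d ∈ (P j).support, M w (coeff d (P j))) :=
            (one_mul _).symm
        _ ≤ _ := mul_le_mul_of_nonneg_right (hprod1 w)
            (zero_le_one.trans (one_le_prodR _ _ fun j _ => le_max_left _ _))
    · have hv : ∀ x y : K, M w (x + y) ≤ max (M w x) (M w y) := by
        by_contra hc
        exact hw hc
      have hb1 := eval_bound_ultra (M w) hv (P i) (hhom i) b
      refine hb1.trans (mul_le_mul_of_nonneg_right ?_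
        (pow_nonneg (vNorm_nonneg _ _) _))
      have hfac : (∏ d ∈ (P i).support, max 1 (M w (coeff d (P i)))) ≤
          ∏ j : Fin 3, ∏ d ∈ (P j).support, max 1 (M w (coeff d (P j))) :=
        single_le_prodR _ (fun j => ∏ d ∈ (P j).support, max 1 (M w (coeff d (P j))))
          (fun j _ => one_le_prodR _ _ fun d _ => le_max_left _ _) (Finset.mem_univ i)
      rw [hBdef]
      simp only [if_neg hw, mul_one]
      exact hfac
  -- finiteness of the support of `log ∘ B`
  have hBfin : (Function.support fun w => Real.log (B w)).Finite := by
    have hsub : (Function.support fun w => Real.log (B w)) ⊆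
        bad ∪ ⋃ i : Fin 3, ⋃ d ∈ (P i).support,
          Function.support fun w => Real.log (M w (coeff d (P i))) := by
      intro w hw
      simp only [Function.mem_support] at hw
      by_contra hcon
      simp only [Set.mem_union, Set.mem_iUnion, Function.mem_support, not_or,
        not_exists, not_not] at hcon
      obtain ⟨hw1, hw2⟩ := hcon
      have hone : ∀ i : Fin 3, ∀ d ∈ (P i).support, max 1 (M w (coeff d (P i))) = 1 := by
        intro i d hd
        have hc0 : coeff d (P i) ≠ 0 := mem_support_iff.mp hd
        have hpos := (M w).pos hc0
        rcases Real.log_eq_zero.mp (hw2 i d hd) with h | h | h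
        · exact absurd h (ne_of_gt hpos)
        · rw [h]; exact max_self 1
        · linarith
      have hBw : B w = 1 := by
        rw [hBdef]
        simp only [if_neg hw1, mul_one]
        refine Finset.prod_eq_one fun i _ => Finset.prod_eq_one fun d hd => hone i d hd
      exact hw (by rw [hBw, Real.log_one])
    refine Set.Finite.subset (harch.union (Set.finite_iUnion fun i => ?_)) hsub
    refine Set.Finite.biUnion ((P i).support.finite_toSet) fun d hd => ?_
    exact hfin _ (mem_support_iff.mp hd)
  set C : ℝ := ∑ᶠ w : ι, Real.log (B w) with hCdef
  have hC0 : 0 ≤ C := finsum_nonneg fun w => Real.log_nonneg (hB1 w)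
  -- the global height inequality
  have hrec0 : ∀ b : Fin 3 → K, b ≠ 0 → polyMap P b ≠ 0 →
      ∑ᶠ w : ι, Real.log (vNorm (M w) (polyMap P b)) ≤
        (lam : ℝ) * ∑ᶠ w : ι, Real.log (vNorm (M w) b) + C := by
    intro b hb hFb
    set s : Finset ι := ((hsupp _ hFb).union ((hsupp b hb).union hBfin)).toFinset with hs
    have hcoe : (s : Set ι) =
        (Function.support fun w => Real.log (vNorm (M w) (polyMap P b))) ∪
        ((Function.support fun w => Real.log (vNorm (M w) b)) ∪
          Function.support fun w => Real.log (B w)) := by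
      rw [hs, Set.Finite.coe_toFinset]
    have e1 : ∑ᶠ w : ι, Real.log (vNorm (M w) (polyMap P b)) =
        ∑ w ∈ s, Real.log (vNorm (M w) (polyMap P b)) := by
      refine finsum_eq_sum_of_support_subset _ ?_
      rw [hcoe]; exact Set.subset_union_left
    have e2 : ∑ᶠ w : ι, Real.log (vNorm (M w) b) =
        ∑ w ∈ s, Real.log (vNorm (M w) b) := by
      refine finsum_eq_sum_of_support_subset _ ?_
      rw [hcoe]; exact Set.subset_union_of_subset_right Set.subset_union_left _
    have e3 : C = ∑ w ∈ s, Real.log (B w) := by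
      rw [hCdef]
      refine finsum_eq_sum_of_support_subset _ ?_
      rw [hcoe]; exact Set.subset_union_of_subset_right Set.subset_union_right _
    rw [e1, e2, e3, Finset.mul_sum, ← Finset.sum_add_distrib]
    refine Finset.sum_le_sum fun w _ => ?_
    have h1 : 0 < vNorm (M w) (polyMap P b) := vNorm_pos _ hFb
    have h2 : 0 < vNorm (M w) b := vNorm_pos _ hb
    have hBw : (0:ℝ) < B w := zero_lt_one.trans_le (hB1 w)
    have hcalc : Real.log (vNorm (M w) (polyMap P b)) ≤
        Real.log (B w) + (lam : ℝ) * Real.log (vNorm (M w) b) := by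
      calc Real.log (vNorm (M w) (polyMap P b))
          ≤ Real.log (B w * vNorm (M w) b ^ lam) :=
            (Real.log_le_log_iff h1 (by positivity)).mpr (hBbound w b)
        _ = Real.log (B w) + (lam : ℝ) * Real.log (vNorm (M w) b) := by
            rw [Real.log_mul (ne_of_gt hBw) (by positivity), Real.log_pow]
    linarith
  -- numerics for q = 1/λ
  have hlam0 : (0:ℝ) < (lam : ℝ) := by
    have : 0 < lam := lt_of_lt_of_le two_pos hlam
    exact_mod_cast this
  set q : ℝ := ((lam : ℝ))⁻¹ with hq
  have hq0 : 0 < q := inv_pos.mpr hlam0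
  have hq1 : q < 1 := by
    have h1 : (1:ℝ) < (lam : ℝ) := by
      have : 1 < lam := lt_of_lt_of_le one_lt_two hlam
      exact_mod_cast this
    exact inv_lt_one_of_one_lt₀ h1
  have hql : q * (lam : ℝ) = 1 := inv_mul_cancel₀ (ne_of_gt hlam0)
  -- the sequence u n = q^n h(F^n a)
  set u : ℕ → ℝ := fun n => q ^ n * ∑ᶠ w : ι, Real.log (vNorm (M w) ((polyMap P)^[n] a))
    with hu
  have hu0 : ∀ n, 0 ≤ u n := fun n =>
    mul_nonneg (pow_nonneg hq0.le n) (hnonneg _ (ha n))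
  have hurec : ∀ n, u (n + 1) ≤ u n + C * q ^ (n + 1) := by
    intro n
    have hFn1 : polyMap P ((polyMap P)^[n] a) ≠ 0 := by
      have h := ha (n + 1)
      rwa [Function.iterate_succ_apply'] at h
    have h1 := hrec0 ((polyMap P)^[n] a) (ha n) hFn1
    calc u (n + 1)
        = q ^ (n + 1) *
          ∑ᶠ w : ι, Real.log (vNorm (M w) (polyMap P ((polyMap P)^[n] a))) := by
          simp only [hu, Function.iterate_succ_apply']
      _ ≤ q ^ (n + 1) * ((lam : ℝ) *
            (∑ᶠ w : ι, Real.log (vNorm (M w) ((polyMap P)^[n] a))) + C) :=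
          mul_le_mul_of_nonneg_left h1 (pow_nonneg hq0.le (n + 1))
      _ = (q * (lam : ℝ)) * (q ^ n *
            ∑ᶠ w : ι, Real.log (vNorm (M w) ((polyMap P)^[n] a))) + C * q ^ (n + 1) := by
          ring
      _ = u n + C * q ^ (n + 1) := by
          rw [hql, one_mul]
  obtain ⟨L, hL0, hL⟩ := tate_limit hq0 hq1 hC0 u hu0 hurec
  refine ⟨L, hL, hL0, ?_⟩
  -- the shifted sequence
  have hshift : Tendsto (fun n : ℕ => u (n + 1)) atTop (nhds L) :=
    hL.comp (tendsto_add_atTop_nat 1)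
  have hmul : Tendsto (fun n : ℕ => (lam : ℝ) * u (n + 1)) atTop
      (nhds ((lam : ℝ) * L)) := hshift.const_mul _
  have hfun : (fun n : ℕ => q ^ n *
      ∑ᶠ w : ι, Real.log (vNorm (M w) ((polyMap P)^[n] (polyMap P a)))) =
      fun n : ℕ => (lam : ℝ) * u (n + 1) := by
    funext n
    simp only [hu]
    rw [← Function.iterate_succ_apply]
    have h5 : (lam : ℝ) * (q ^ (n + 1) *
        ∑ᶠ w : ι, Real.log (vNorm (M w) ((polyMap P)^[n + 1] a))) =
        ((lam : ℝ) * q) * (q ^ n *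
          ∑ᶠ w : ι, Real.log (vNorm (M w) ((polyMap P)^[n + 1] a))) := by ring
    rw [h5, mul_comm (lam : ℝ) q, hql, one_mul]
  rw [hfun]
  exact hmul
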